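/- Let h(x) = 12x³/(1 − 2x) − 6x³/(1 − x). For x ∈ (0.1, 0.2), the derivative of the function x ↦ x(x−1)h'(x)/h(x) equals 4x(x−1)/(1−2x)², and in particular this derivative is negative on (0.1, 0.2). -/

import Mathlib

noncomputable def hfun (x : ℝ) : ℝ := 12 * x^3 / (1 - 2*x) - 6 * x^3 / (1 - x)

lemma hasDerivAt_hfun (y : ℝ) (h1 : (1 - 2*y) ≠ 0) (h2 : (1 - y) ≠ 0) :
    HasDerivAt hfun
      ((36*y^2*(1-2*y) + 24*y^3)/(1-2*y)^2 - (18*y^2*(1-y) + 6*y^3)/(1-y)^2) y := by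
  have hnum1 : HasDerivAt (fun x : ℝ => 12 * x^3) (36*y^2) y := by
    have := (hasDerivAt_pow 3 y).const_mul (12:ℝ)
    refine this.congr_deriv ?_; push_cast; ring
  have hden1 : HasDerivAt (fun x : ℝ => 1 - 2*x) (-2) y := by
    simpa using ((hasDerivAt_id y).const_mul (2:ℝ)).const_sub (1:ℝ)
  have hnum2 : HasDerivAt (fun x : ℝ => 6 * x^3) (18*y^2) y := by
    have := (hasDerivAt_pow 3 y).const_mul (6:ℝ)
    refine this.congr_deriv ?_; push_cast; ring
  have hden2 : HasDerivAt (fun x : ℝ => 1 - x) (-1) y := by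
    simpa using (hasDerivAt_id y).const_sub (1:ℝ)
  have := (hnum1.div hden1 h1).sub (hnum2.div hden2 h2)
  refine this.congr_deriv ?_
  field_simp
  ring

lemma G_hasDerivAt (y : ℝ) (h1 : (1 - 2*y) ≠ 0) :
    HasDerivAt (fun z : ℝ => 3*(z-1) + 2*z*(z-1)/(1-2*z) - z)
      (4*y*(y-1)/(1-2*y)^2) y := by
  have hnum : HasDerivAt (fun z : ℝ => 2*z*(z-1)) (2*(y-1) + 2*y) y := by
    have := ((hasDerivAt_id y).const_mul (2:ℝ)).mul ((hasDerivAt_id y).sub_const 1)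
    refine this.congr_deriv ?_; simp
  have hden : HasDerivAt (fun z : ℝ => 1 - 2*z) (-2) y := by
    simpa using ((hasDerivAt_id y).const_mul (2:ℝ)).const_sub (1:ℝ)
  have h3 : HasDerivAt (fun z : ℝ => 3*(z-1)) (3:ℝ) y := by
    simpa using ((hasDerivAt_id y).sub_const (1:ℝ)).const_mul (3:ℝ)
  have := (h3.add (hnum.div hden h1)).sub (hasDerivAt_id y)
  refine this.congr_deriv ?_
  field_simp
  ring

/-- On `(0.1, 0.2)`, the derivative of `x ↦ x(x−1)h'(x)/h(x)` equals
`4x(x−1)/(1−2x)²`, which is negative there. -/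
theorem deriv_ratio_eq (x : ℝ) (hx : x ∈ Set.Ioo (0.1 : ℝ) 0.2) :
    deriv (fun y => y * (y - 1) * deriv hfun y / hfun y) x
      = 4 * x * (x - 1) / (1 - 2*x)^2 ∧
    4 * x * (x - 1) / (1 - 2*x)^2 < 0 := by
  obtain ⟨hxl, hxr⟩ := hx
  have h1x : (0:ℝ) < 1 - 2*x := by linarith
  have h2x : (0:ℝ) < 1 - x := by linarith
  constructor
  · have heq : (fun y => y * (y - 1) * deriv hfun y / hfun y)
        =ᶠ[nhds x] (fun z : ℝ => 3*(z-1) + 2*z*(z-1)/(1-2*z) - z) := by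
      have hmem : Set.Ioo (0.1:ℝ) 0.2 ∈ nhds x :=
        isOpen_Ioo.mem_nhds ⟨hxl, hxr⟩
      filter_upwards [hmem] with y hy
      obtain ⟨hyl, hyr⟩ := hy
      have hy0 : (0:ℝ) < y := by linarith
      have h1 : (0:ℝ) < 1 - 2*y := by linarith
      have h2 : (0:ℝ) < 1 - y := by linarith
      have hder := (hasDerivAt_hfun y h1.ne' h2.ne').deriv
      have hval : hfun y = 6*y^3 / ((1-2*y)*(1-y)) := by
        unfold hfun; field_simp [show (1:ℝ) - y*2 ≠ 0 by linarith, h2.ne']; ring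
      have hpos : hfun y ≠ 0 := by
        rw [hval]
        positivity
      rw [hder, hval]
      field_simp [show (1:ℝ) - y*2 ≠ 0 by linarith, h2.ne']
      ring
    rw [heq.deriv_eq, (G_hasDerivAt x h1x.ne').deriv]
  · apply div_neg_of_neg_of_pos
    · nlinarith
    · positivity
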